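/- Monotonicity of the optimal recovery: if d ≤ d' componentwise, then the componentwise-minimum solutions û (for deviations d) and û' (for deviations d') of the system {u_h − u_k ≤ s_{h,k} ∀(h,k)∈A, u_h ≥ deviations} satisfy û ≤ û' componentwise; moreover if d' = d + c·1 for a constant c ≥ 0 then û' = û + c·1. -/

import Mathlib

/-- monotonicity of the optimal recovery: if d ≤ d' then the
componentwise-minimum solutions satisfy û ≤ û'; and if d' = d + c·1 with
c ≥ 0 then û' = û + c·1. -/
theorem stmt_19 {V : Type*} [Fintype V]
    (A : Set (V × V)) (s : V → V → ℝ) (d d' : V → ℝ)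
    (hs : ∀ hk ∈ A, 0 ≤ s hk.1 hk.2)
    (uhat uhat' : V → ℝ)
    (hfeas : (∀ hk ∈ A, uhat hk.1 - uhat hk.2 ≤ s hk.1 hk.2) ∧ (∀ h, d h ≤ uhat h))
    (hmin : ∀ u : V → ℝ,
      (∀ hk ∈ A, u hk.1 - u hk.2 ≤ s hk.1 hk.2) → (∀ h, d h ≤ u h) →
      ∀ k, uhat k ≤ u k)
    (hfeas' : (∀ hk ∈ A, uhat' hk.1 - uhat' hk.2 ≤ s hk.1 hk.2) ∧
      (∀ h, d' h ≤ uhat' h))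
    (hmin' : ∀ u : V → ℝ,
      (∀ hk ∈ A, u hk.1 - u hk.2 ≤ s hk.1 hk.2) → (∀ h, d' h ≤ u h) →
      ∀ k, uhat' k ≤ u k)
    (hdd : ∀ h, d h ≤ d' h) :
    (∀ k, uhat k ≤ uhat' k) ∧
    (∀ c : ℝ, 0 ≤ c → (∀ h, d' h = d h + c) → ∀ k, uhat' k = uhat k + c) := by
  constructor
  · exact hmin uhat' hfeas'.1 (fun h => (hdd h).trans (hfeas'.2 h))
  · intro c _ hc k
    have h1 : uhat' k ≤ uhat k + c := by
      apply hmin' (fun x => uhat x + c)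
      · intro hk hA; simpa using hfeas.1 hk hA
      · intro h; rw [hc h]; exact add_le_add_left (hfeas.2 h) c
    have h2 : uhat k ≤ uhat' k - c := by
      apply hmin (fun x => uhat' x - c)
      · intro hk hA; simpa using hfeas'.1 hk hA
      · intro h; have := hfeas'.2 h; rw [hc h] at this; linarith
    linarith
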